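/- Let ρ ≥ 1 and let sequences x_k, u_k in a convex set Q be generated by x_0 = u_0, x_{k+1} = y_{k+1} + ρ(α_{k+1}/A_{k+1})(u_{k+1} - u_k), and y_{k+1} = (α_{k+1}u_k + A_k x_k)/A_{k+1}, where A_{k+1} = A_k + α_{k+1} = ρ²α_{k+1}², A_0 = α_0 = 1 - 1/ρ, and u_k ∈ Q for all k. Then for every k, x_k is a convex combination of u_0, ..., u_k, and hence x_k, y_k ∈ Q. -/

import Mathlib

/-- Correctness of RSTM iterates (Lemma 1): with `ρ ≥ 1`,
`A 0 = α 0 = 1 - 1/ρ`, `A (k+1) = A k + α (k+1) = ρ²·α (k+1)²` (largest, hence positive,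
roots), `x 0 = y 0 = u 0`, `y (k+1) = (α (k+1)·u k + A k·x k)/A (k+1)` and
`x (k+1) = y (k+1) + ρ(α (k+1)/A (k+1))·(u (k+1) - u k)`, if all `u k` lie in a convex set
`Q` then every `x k` is a convex combination of `u 0, ..., u k`, and `x k, y k ∈ Q`. -/
theorem stmt_16 {E : Type*} [AddCommGroup E] [Module ℝ E]
    (Q : Set E) (hQ : Convex ℝ Q) (ρ : ℝ) (hρ : 1 ≤ ρ)
    (α A : ℕ → ℝ) (u x y : ℕ → E)
    (hα0 : α 0 = 1 - 1 / ρ) (hA0 : A 0 = 1 - 1 / ρ)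
    (hA : ∀ k : ℕ, A (k + 1) = A k + α (k + 1))
    (hA2 : ∀ k : ℕ, A (k + 1) = ρ ^ 2 * α (k + 1) ^ 2)
    (hαpos : ∀ k : ℕ, 0 < α (k + 1))
    (hx0 : x 0 = u 0) (hy0 : y 0 = u 0)
    (hy : ∀ k : ℕ, y (k + 1) = (A (k + 1))⁻¹ • (α (k + 1) • u k + A k • x k))
    (hx : ∀ k : ℕ, x (k + 1) = y (k + 1) + (ρ * α (k + 1) / A (k + 1)) • (u (k + 1) - u k))
    (hu : ∀ k : ℕ, u k ∈ Q) :
    ∀ k : ℕ,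
      (∃ γ : ℕ → ℝ, (∀ l, 0 ≤ γ l) ∧ (∑ l ∈ Finset.range (k + 1), γ l) = 1 ∧
        x k = ∑ l ∈ Finset.range (k + 1), γ l • u l) ∧
      x k ∈ Q ∧ y k ∈ Q := by
  have hρ0 : (0:ℝ) < ρ := lt_of_lt_of_le one_pos hρ
  have hρne : ρ ≠ 0 := ne_of_gt hρ0
  have hc : ρ * (1 - 1 / ρ) = ρ - 1 := by field_simp
  have e : ρ ^ 2 * α 1 ^ 2 = (1 - 1 / ρ) + α 1 := by rw [← hA2 0, hA 0, hA0]
  have hρα1 : ρ * α 1 = 1 := by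
    have h3 := hαpos 0
    have hfac : (ρ * α 1 - 1) * (ρ ^ 2 * α 1 + ρ - 1) = 0 := by
      linear_combination ρ * e + hc
    rcases mul_eq_zero.mp hfac with h | h
    · linarith
    · exfalso; nlinarith [mul_pos (pow_pos hρ0 2) h3]
  have Apos : ∀ k, 0 < A (k + 1) := by
    intro k; rw [hA2 k]
    have := hαpos k
    positivity
  have A0nn : 0 ≤ A 0 := by
    rw [hA0]
    have h1 : 1 / ρ ≤ 1 := by rw [div_le_one hρ0]; exact hρ
    linarith
  have Ann : ∀ k, 0 ≤ A k := by
    intro k; cases k with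
    | zero => exact A0nn
    | succ n => exact (Apos n).le
  have Age : ∀ k, 1 - 1 / ρ ≤ A k := by
    intro k
    induction k with
    | zero => rw [hA0]
    | succ n ihn => rw [hA n]; linarith [hαpos n]
  have key : ∀ k, 1 ≤ ρ * α (k + 1) := by
    intro k
    have h1 := hA2 k
    have h2 := hA k
    have h5 := hαpos k
    have hqeq : (ρ * α (k + 1) - 1) * (ρ ^ 2 * α (k + 1) + ρ - 1) = ρ * A k - (ρ - 1) := by
      linear_combination ρ * h2 - ρ * h1
    have hm : ρ * (1 - 1 / ρ) ≤ ρ * A k := mul_le_mul_of_nonneg_left (Age k) hρ0.le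
    have hq : 0 ≤ (ρ * α (k + 1) - 1) * (ρ ^ 2 * α (k + 1) + ρ - 1) := by
      rw [hqeq]; linarith [hc]
    have hpos2 : 0 < ρ ^ 2 * α (k + 1) + ρ - 1 := by
      nlinarith [mul_pos (pow_pos hρ0 2) h5]
    nlinarith [hq, hpos2]
  have step_nn : ∀ m, 0 ≤ ρ * α (m + 1) + α (m + 2) - ρ * α (m + 2) := by
    intro m
    have h1 : A (m + 2) = ρ ^ 2 * α (m + 2) ^ 2 := hA2 (m + 1)
    have h2 : A (m + 2) = A (m + 1) + α (m + 2) := hA (m + 1)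
    have h3 : A (m + 1) = ρ ^ 2 * α (m + 1) ^ 2 := hA2 m
    have h4 := hαpos m
    have h5 : 0 < α (m + 2) := hαpos (m + 1)
    have hk := key m
    have hsp : 0 < ρ * (α (m + 1) + α (m + 2)) := by positivity
    have hfac : (ρ * α (m + 1) + α (m + 2) - ρ * α (m + 2)) * (ρ * (α (m + 1) + α (m + 2)))
        = α (m + 2) * (ρ * (α (m + 1) + α (m + 2)) - 1) := by
      linear_combination h1 - h2 - h3
    have hrhs : 0 ≤ α (m + 2) * (ρ * (α (m + 1) + α (m + 2)) - 1) := by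
      apply mul_nonneg h5.le
      nlinarith [mul_pos hρ0 h5]
    nlinarith [hfac, hrhs, hsp]
  -- strengthened induction
  have main : ∀ k, ∃ γ : ℕ → ℝ, (∀ l, 0 ≤ γ l) ∧ (∑ l ∈ Finset.range (k + 1), γ l) = 1 ∧
      x k = ∑ l ∈ Finset.range (k + 1), γ l • u l ∧ (k = 0 ∨ γ k = ρ * α k / A k) := by
    intro k
    induction k with
    | zero =>
      refine ⟨fun l => if l = 0 then 1 else 0, ?_, ?_, ?_, Or.inl rfl⟩
      · intro l; by_cases h : l = 0 <;> simp [h]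
      · simp
      · simp [hx0]
    | succ k ih =>
      obtain ⟨γ, hnn, hsum, hxk, hlast⟩ := ih
      rcases Nat.eq_zero_or_pos k with rfl | hkpos
      · -- base step: x 1 = u 1
        have hA1 : A 1 = 1 := by
          rw [hA2 0]; linear_combination (ρ * α 1 + 1) * hρα1
        have hα1 : α 1 = 1 / ρ := by
          field_simp; linear_combination hρα1
        have hy1 : y 1 = u 0 := by
          rw [hy 0, hA1, hx0, hA0, inv_one, one_smul, ← add_smul]
          have h : α 1 + (1 - 1 / ρ) = 1 := by rw [hα1]; field_simp; ring
          rw [h, one_smul]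
        have hx1 : x 1 = u 1 := by
          rw [hx 0, hy1, hA1]
          have h : ρ * α 1 / 1 = 1 := by rw [div_one, hρα1]
          rw [h, one_smul]
          abel
        refine ⟨fun l => if l = 1 then 1 else 0, ?_, ?_, ?_, Or.inr ?_⟩
        · intro l; by_cases h : l = 1 <;> simp [h]
        · simp [Finset.sum_range_succ]
        · simp [Finset.sum_range_succ, hx1]
        · norm_num [hA1, hρα1]
      · obtain ⟨m, rfl⟩ := Nat.exists_eq_succ_of_ne_zero (Nat.pos_iff_ne_zero.mp hkpos)
        have hsum' : ∑ l ∈ Finset.range (m + 2), γ l = 1 := hsum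
        have hxk' : x (m + 1) = ∑ l ∈ Finset.range (m + 2), γ l • u l := hxk
        have hγk : γ (m + 1) = ρ * α (m + 1) / A (m + 1) := hlast.resolve_left (by omega)
        have hAkne : A (m + 1) ≠ 0 := (Apos m).ne'
        have hA'ne : A (m + 2) ≠ 0 := (Apos (m + 1)).ne'
        have hA'pos : 0 < A (m + 2) := Apos (m + 1)
        have hArel : A (m + 2) = A (m + 1) + α (m + 2) := hA (m + 1)
        set δ : ℕ → ℝ := fun l => if l = m + 2 then ρ * α (m + 2) / A (m + 2)
          else (A (m + 1) / A (m + 2)) * γ l +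
            (if l = m + 1 then α (m + 2) / A (m + 2) - ρ * α (m + 2) / A (m + 2) else 0)
          with hδdef
        have hδtop : δ (m + 2) = ρ * α (m + 2) / A (m + 2) := by
          simp [hδdef]
        have hδmid : δ (m + 1) = (A (m + 1) / A (m + 2)) * γ (m + 1) +
            (α (m + 2) / A (m + 2) - ρ * α (m + 2) / A (m + 2)) := by
          simp [hδdef]
        have hδlow : ∀ l, l ≠ m + 1 → l ≠ m + 2 → δ l = (A (m + 1) / A (m + 2)) * γ l := by
          intro l h1 h2
          simp only [hδdef]; rw [if_neg h2, if_neg h1, add_zero]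
        refine ⟨δ, ?_, ?_, ?_, Or.inr ?_⟩
        · intro l
          rcases eq_or_ne l (m + 2) with rfl | h2
          · rw [hδtop]
            have := hαpos (m + 1)
            positivity
          rcases eq_or_ne l (m + 1) with rfl | h1
          · rw [hδmid, hγk]
            have heq : (A (m + 1) / A (m + 2)) * (ρ * α (m + 1) / A (m + 1)) +
                (α (m + 2) / A (m + 2) - ρ * α (m + 2) / A (m + 2)) =
                (ρ * α (m + 1) + α (m + 2) - ρ * α (m + 2)) / A (m + 2) := by
              field_simp
              ring
            rw [heq]
            exact div_nonneg (step_nn m) hA'pos.le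
          · rw [hδlow l h1 h2]
            exact mul_nonneg (div_nonneg (Apos m).le hA'pos.le) (hnn l)
        · show ∑ l ∈ Finset.range (m + 3), δ l = 1
          rw [Finset.sum_range_succ, Finset.sum_range_succ, hδtop, hδmid]
          have hsplit : ∑ l ∈ Finset.range (m + 1), δ l =
              (A (m + 1) / A (m + 2)) * ∑ l ∈ Finset.range (m + 1), γ l := by
            rw [Finset.mul_sum]
            refine Finset.sum_congr rfl fun l hl => ?_
            have hl' := Finset.mem_range.mp hl
            exact hδlow l (by omega) (by omega)
          rw [hsplit]
          have hS : ∑ l ∈ Finset.range (m + 1), γ l = 1 - γ (m + 1) := by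
            have h := hsum'
            rw [Finset.sum_range_succ] at h
            linarith
          rw [hS]
          field_simp
          linarith [hArel]
        · show x (m + 2) = ∑ l ∈ Finset.range (m + 3), δ l • u l
          have hxs : x (m + 2) = y (m + 2) +
              (ρ * α (m + 2) / A (m + 2)) • (u (m + 2) - u (m + 1)) := hx (m + 1)
          have hys : y (m + 2) = (A (m + 2))⁻¹ •
              (α (m + 2) • u (m + 1) + A (m + 1) • x (m + 1)) := hy (m + 1)
          have hxk2 : x (m + 1) = (∑ l ∈ Finset.range (m + 1), γ l • u l) +
              γ (m + 1) • u (m + 1) := by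
            rw [hxk']; rw [Finset.sum_range_succ]
          have hsplit2 : ∑ l ∈ Finset.range (m + 1), δ l • u l =
              (A (m + 1) / A (m + 2)) • ∑ l ∈ Finset.range (m + 1), γ l • u l := by
            rw [Finset.smul_sum]
            refine Finset.sum_congr rfl fun l hl => ?_
            have hl' := Finset.mem_range.mp hl
            rw [hδlow l (by omega) (by omega), smul_smul]
          rw [Finset.sum_range_succ, Finset.sum_range_succ, hδtop, hδmid, hsplit2,
            hxs, hys, hxk2]
          match_scalars <;> ring
        · exact hδtop
  have xmem : ∀ k, x k ∈ Q := by
    intro k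
    obtain ⟨γ, hnn, hsum, hxk, -⟩ := main k
    rw [hxk]
    exact hQ.sum_mem (fun i _ => hnn i) hsum (fun i _ => hu i)
  have ymem : ∀ k, y k ∈ Q := by
    intro k
    cases k with
    | zero => rw [hy0]; exact hu 0
    | succ n =>
      have hA'ne : A (n + 1) ≠ 0 := (Apos n).ne'
      have heq : y (n + 1) = (α (n + 1) / A (n + 1)) • u n + (A n / A (n + 1)) • x n := by
        rw [hy n]
        match_scalars <;> ring
      rw [heq]
      refine hQ (hu n) (xmem n) (div_nonneg (hαpos n).le (Apos n).le)
        (div_nonneg (Ann n) (Apos n).le) ?_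
      rw [← add_div, add_comm, ← hA n, div_self hA'ne]
  intro k
  obtain ⟨γ, h1, h2, h3, -⟩ := main k
  exact ⟨⟨γ, h1, h2, h3⟩, xmem k, ymem k⟩
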